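/- Let G be a finite simple graph with chromatic number χ(G), and let V_1, …, V_{χ(G)} be the colour classes of a proper colouring of G with χ(G) colours. Let σ be a bijection from V(G) to [n] that places all vertices of V_1 first, then V_2, and so on. Then in the partial order C_{G,σ} — the set of open intervals (σ(u), σ(v)) over edges {u,v} of G with σ(u) < σ(v), ordered by (a,b) ⊲ (c,d) iff b ≤ c — every chain has size at most χ(G) − 1. -/

import Mathlib

/-- The collection `C_{G,σ}` of open intervals `(σ u, σ v)` over edges `{u,v}` of `G`
with `σ u < σ v`. -/
def CIdx {V : Type*} [Fintype V] (G : SimpleGraph V) (σ : V ≃ Fin (Fintype.card V)) :=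
  {p : Fin (Fintype.card V) × Fin (Fintype.card V) //
    ∃ u v : V, G.Adj u v ∧ σ u < σ v ∧ p = (σ u, σ v)}

/-- The interval order on `C_{G,σ}`: `(a,b) ⊲ (c,d)` iff `b ≤ c`. -/
def CRel {V : Type*} [Fintype V] (G : SimpleGraph V) (σ : V ≃ Fin (Fintype.card V))
    (x y : CIdx G σ) : Prop := x.val.2 ≤ y.val.1

/-- If `σ` places the colour classes `V_1, …, V_{χ(G)}` of an optimal proper colouring
of `G` consecutively in this order, then every chain of the interval order `C_{G,σ}`
has size at most `χ(G) - 1`. -/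
theorem stmt6 {V : Type*} [Fintype V] (G : SimpleGraph V) (c : ℕ)
    (hc : G.chromaticNumber = (c : ℕ∞)) (col : G.Coloring (Fin c))
    (σ : V ≃ Fin (Fintype.card V))
    (hσ : ∀ u v : V, col u < col v → σ u < σ v)
    (S : Finset (CIdx G σ))
    (hS : ∀ p ∈ S, ∀ q ∈ S, p ≠ q → CRel G σ p q ∨ CRel G σ q p) :
    S.card ≤ c - 1 := by
  classical
  -- For each element of `CIdx`, the colour of the left endpoint is less than
  -- the colour of the right endpoint.
  have key : ∀ p : CIdx G σ,
      col (σ.symm p.val.1) < col (σ.symm p.val.2) := by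
    rintro ⟨p, u, v, hadj, hlt, rfl⟩
    simp only [Equiv.symm_apply_apply]
    rcases lt_trichotomy (col u) (col v) with h | h | h
    · exact h
    · exact absurd h (col.valid hadj)
    · exact absurd (hσ v u h) (asymm hlt)
  -- `CRel p q` implies the right colour of `p` is at most the left colour of `q`.
  have crel : ∀ p q : CIdx G σ, CRel G σ p q →
      col (σ.symm p.val.2) ≤ col (σ.symm q.val.1) := by
    intro p q h
    by_contra hc'
    push_neg at hc'
    have h2 := hσ _ _ hc'
    simp only [Equiv.apply_symm_apply] at h2
    exact absurd (lt_of_lt_of_le h2 h) (lt_irrefl _)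
  have hcard := Finset.card_le_card_of_injOn
    (f := fun p : CIdx G σ => (col (σ.symm p.val.1)).val)
    (t := Finset.range (c - 1)) ?_ ?_ (s := S)
  · simpa using hcard
  · intro p _
    have h1 := key p
    have h2 := (col (σ.symm p.val.2)).isLt
    simp only [Finset.mem_coe, Finset.mem_range]
    have : (col (σ.symm p.val.1)).val < (col (σ.symm p.val.2)).val := h1
    omega
  · intro p hp q hq hfe
    have hfe' : (col (σ.symm p.val.1)).val = (col (σ.symm q.val.1)).val := hfe
    by_contra hne
    rcases hS p hp q hq hne with h | h
    · have h1 := key p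
      have h2 := crel p q h
      have : (col (σ.symm p.val.1)).val < (col (σ.symm q.val.1)).val :=
        lt_of_lt_of_le h1 h2
      omega
    · have h1 := key q
      have h2 := crel q p h
      have : (col (σ.symm q.val.1)).val < (col (σ.symm p.val.1)).val :=
        lt_of_lt_of_le h1 h2
      omega
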